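/- For all integers α ≥ 2 and β ≥ α: Σ_{n=α}^{β−1} 2/(n+1) ≤ Σ_{n=α}^{β} 1/n if and only if β ≤ α + 1 (sums over integers, taken in ℚ; the left sum is empty when β = α). This is the arithmetic core of the paper's Theorem 5.1: under a uniform prior on the network size n over {α,…,β}, a cheater in fair Leader Election who duplicates into 2 agents (winning with probability 2/(n+1) when undetected, i.e., when n + 1 ≤ β) has expected utility at most that of honestly participating (winning with probability 1/n) exactly when β ≤ α + 1. -/

import Mathlib

theorem stmt_10 (α β : ℤ) (hα : 2 ≤ α) (hαβ : α ≤ β) :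
    (∑ n ∈ Finset.Icc α (β - 1), (2 : ℚ) / ((n : ℚ) + 1) ≤
        ∑ n ∈ Finset.Icc α β, (1 : ℚ) / (n : ℚ)) ↔ β ≤ α + 1 := by
  have hre : ∑ n ∈ Finset.Icc α (β - 1), (2 : ℚ) / ((n : ℚ) + 1)
      = ∑ n ∈ Finset.Icc (α + 1) β, (2 : ℚ) / (n : ℚ) := by
    rw [show Finset.Icc (α+1) β = (Finset.Icc α (β-1)).map (addRightEmbedding 1) by
      rw [Finset.map_add_right_Icc]; ring_nf, Finset.sum_map]
    simp [addRightEmbedding]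
  have hnotmem : α ∉ Finset.Icc (α+1) β := by
    simp
  have hsplit : Finset.Icc α β = insert α (Finset.Icc (α+1) β) := by
    ext x
    simp only [Finset.mem_Icc, Finset.mem_insert]
    omega
  have htwo : ∑ n ∈ Finset.Icc (α + 1) β, (2 : ℚ) / (n : ℚ)
      = 2 * ∑ n ∈ Finset.Icc (α + 1) β, (1 : ℚ) / (n : ℚ) := by
    rw [Finset.mul_sum]
    apply Finset.sum_congr rfl
    intro n _
    ring
  set S := ∑ n ∈ Finset.Icc (α + 1) β, (1 : ℚ) / (n : ℚ) with hS
  have hrhs : ∑ n ∈ Finset.Icc α β, (1 : ℚ) / (n : ℚ) = 1 / (α : ℚ) + S := by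
    rw [hsplit, Finset.sum_insert hnotmem]
  rw [hre, htwo, hrhs]
  have hαQ : (2 : ℚ) ≤ (α : ℚ) := by exact_mod_cast hα
  constructor
  · intro h
    by_contra hb
    push_neg at hb
    have hb' : α + 2 ≤ β := by omega
    have hSle : S ≤ 1 / (α : ℚ) := by linarith
    have hsub : Finset.Icc (α+1) (α+2) ⊆ Finset.Icc (α+1) β :=
      Finset.Icc_subset_Icc_right hb'
    have hge : ∑ n ∈ Finset.Icc (α+1) (α+2), (1 : ℚ) / (n : ℚ) ≤ S := by
      apply Finset.sum_le_sum_of_subset_of_nonneg hsub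
      intro i hi _
      have : α + 1 ≤ i := (Finset.mem_Icc.mp hi).1
      have : (0:ℚ) < (i:ℚ) := by exact_mod_cast lt_of_lt_of_le (by linarith) this
      positivity
    have hcomp : ∑ n ∈ Finset.Icc (α+1) (α+2), (1 : ℚ) / (n : ℚ)
        = 1 / ((α:ℚ)+1) + 1 / ((α:ℚ)+2) := by
      rw [show Finset.Icc (α+1) (α+2) = {α+1, α+2} from by ext x; simp [Finset.mem_Icc]; omega]
      rw [Finset.sum_insert (by simp), Finset.sum_singleton]
      push_cast
      ring
    have : 1 / (α : ℚ) < 1 / ((α:ℚ)+1) + 1 / ((α:ℚ)+2) := by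
      rw [div_add_div _ _ (by linarith) (by linarith), div_lt_div_iff₀ (by linarith) (by positivity)]
      nlinarith
    linarith
  · intro hb
    have hSle : S ≤ 1 / (α : ℚ) := by
      rcases eq_or_lt_of_le hαβ with h | h
      · have : Finset.Icc (α+1) β = ∅ := by
          apply Finset.Icc_eq_empty; omega
        rw [hS, this, Finset.sum_empty]
        positivity
      · have hβ : β = α + 1 := by omega
        subst hβ
        rw [hS, Finset.Icc_self, Finset.sum_singleton]
        push_cast
        rw [div_le_div_iff₀ (by linarith) (by linarith)]
        linarith
    linarith
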